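/- Let Γ be a finite simple graph with vertex set V. Suppose that for every subset W ⊆ V such that the induced subgraph Γ(W) is disconnected and W is maximal among subsets with disconnected induced subgraph, the induced subgraph Γ(W) has no edges. Then Γ is a complete multipartite graph; equivalently, the relation on V given by 'u = v or u and v are non-adjacent' is an equivalence relation, and two vertices are adjacent precisely when they lie in different equivalence classes. -/

import Mathlib

/-- `W` induces a disconnected subgraph of `Γ`: it splits into two nonempty parts with no
edge of `Γ` between them. -/
def IsDisconnectedIn {V : Type*} (Γ : SimpleGraph V) (W : Set V) : Prop :=
  ∃ W₁ W₂ : Set V, W₁.Nonempty ∧ W₂.Nonempty ∧ Disjoint W₁ W₂ ∧ W₁ ∪ W₂ = W ∧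
    ∀ v ∈ W₁, ∀ w ∈ W₂, ¬ Γ.Adj v w

/-- Any disconnected set extends to a maximal disconnected set. -/
lemma exists_maximal_disconnected {V : Type*} [Fintype V] (Γ : SimpleGraph V) (W : Set V)
    (hW : IsDisconnectedIn Γ W) :
    ∃ W' : Set V, W ⊆ W' ∧ IsDisconnectedIn Γ W' ∧
      ∀ W'' : Set V, W' ⊆ W'' → IsDisconnectedIn Γ W'' → W'' = W' := by
  classical
  have hfin : {X : Set V | W ⊆ X ∧ IsDisconnectedIn Γ X}.Finite := Set.finite_univ.subset (by simp)
  obtain ⟨W', hW', hmax⟩ := Set.Finite.exists_maximalFor (fun X => X.ncard) _ hfin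
    ⟨W, subset_refl W, hW⟩
  refine ⟨W', hW'.1, hW'.2, fun W'' hsub hdis => ?_⟩
  have hle : W'.ncard ≤ W''.ncard := Set.ncard_le_ncard hsub (Set.toFinite _)
  have := hmax (show W'' ∈ {X : Set V | W ⊆ X ∧ IsDisconnectedIn Γ X} from ⟨hW'.1.trans hsub, hdis⟩) hle
  exact (Set.eq_of_subset_of_ncard_le hsub this.ge (Set.toFinite _)).symm

/-- If every subset `W` of vertices which induces a disconnected subgraph of
`Γ`, and which is maximal with this property, induces a subgraph with no edges, then `Γ` is a
complete multipartite graph: the relation "`u = v` or `u`, `v` non-adjacent" is an equivalence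
relation, and two vertices are adjacent exactly when they lie in different classes. -/
theorem stmt_7 {V : Type*} [Fintype V] (Γ : SimpleGraph V)
    (h : ∀ W : Set V, IsDisconnectedIn Γ W →
      (∀ W' : Set V, W ⊆ W' → IsDisconnectedIn Γ W' → W' = W) →
      ∀ v ∈ W, ∀ w ∈ W, ¬ Γ.Adj v w) :
    Equivalence (fun u v : V => u = v ∨ ¬ Γ.Adj u v) ∧
    ∀ u v : V, Γ.Adj u v ↔ ¬ (u = v ∨ ¬ Γ.Adj u v) := by
  constructor
  · constructor
    · intro u; exact Or.inl rfl
    · intro u v huv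
      rcases huv with rfl | hn
      · exact Or.inl rfl
      · exact Or.inr (fun hadj => hn hadj.symm)
    · intro u v w huv hvw
      rcases huv with rfl | hn₁
      · exact hvw
      rcases hvw with rfl | hn₂
      · exact Or.inr hn₁
      by_cases huw : u = w
      · exact Or.inl huw
      refine Or.inr (fun hadj => ?_)
      have hvu : v ≠ u := by rintro rfl; exact hn₂ hadj
      have hvw' : v ≠ w := by rintro rfl; exact hn₁ hadj
      have hdis : IsDisconnectedIn Γ {u, v, w} := by
        refine ⟨{u, w}, {v}, ⟨u, by simp⟩, ⟨v, rfl⟩, ?_, ?_, ?_⟩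
        · simp [Set.disjoint_singleton_right, hvu.symm, hvw'.symm]
          tauto
        · ext x; simp; tauto
        · rintro x hx y rfl
          rcases hx with rfl | rfl
          · exact hn₁
          · exact fun ha => hn₂ ha.symm
      obtain ⟨W', hsub, hdis', hmax⟩ := exists_maximal_disconnected Γ _ hdis
      exact h W' hdis' hmax u (hsub (by simp)) w (hsub (by simp)) hadj
  · intro u v
    constructor
    · intro hadj hc
      rcases hc with rfl | hn
      · exact Γ.loopless.irrefl u hadj
      · exact hn hadj
    · intro hc
      by_contra hadj
      exact hc (Or.inr hadj)
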